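/- arXiv:2312.03311 — 5 statements merged into one kernel-verified Lean document; each statement's English description precedes it below -/
import Mathlib

section
/- Let A and B be self-adjoint invertible bounded linear operators on a Hilbert space H, and let c ≥ 1. If ‖A f‖/‖B f‖ ∈ [c⁻¹, c] for all nonzero f ∈ H, then ‖A⁻¹ f‖/‖B⁻¹ f‖ ∈ [c⁻¹, c] for all nonzero f ∈ H. -/
open ContinuousLinearMap

/-- Inverses of self-adjoint operators are self-adjoint. -/
lemma aux_adj_inv {H : Type*} [NormedAddCommGroup H] [InnerProductSpace ℝ H] [CompleteSpace H]
    (A A' : H →L[ℝ] H) (hA : IsSelfAdjoint A)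
    (hAA' : A ∘L A' = 1) (hA'A : A' ∘L A = 1) : IsSelfAdjoint A' := by
  have h1 : A ∘L ContinuousLinearMap.adjoint A' = 1 := by
    have := congrArg ContinuousLinearMap.adjoint hA'A
    rw [adjoint_comp, hA.adjoint_eq] at this
    rw [this, ← star_eq_adjoint, star_one]
  rw [isSelfAdjoint_iff']
  calc ContinuousLinearMap.adjoint A' = (A' ∘L A) ∘L ContinuousLinearMap.adjoint A' := by
        rw [hA'A]; ext x; simp
    _ = A' ∘L (A ∘L ContinuousLinearMap.adjoint A') := by rw [comp_assoc]
    _ = A' := by rw [h1]; ext x; simp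

/-- Key step: if `‖T f‖ ≤ c ‖S f‖` for all `f`, then `‖S' f‖ ≤ c ‖T' f‖` for all `f`,
where `S'`, `T'` are inverses of `S`, `T`. -/
lemma aux_key {H : Type*} [NormedAddCommGroup H] [InnerProductSpace ℝ H] [CompleteSpace H]
    (S T S' T' : H →L[ℝ] H)
    (hS' : IsSelfAdjoint S') (hT : IsSelfAdjoint T)
    (hSS' : S ∘L S' = 1) (hTT' : T ∘L T' = 1)
    (c : ℝ) (hc0 : 0 ≤ c) (hb : ∀ f, ‖T f‖ ≤ c * ‖S f‖) :
    ∀ f, ‖S' f‖ ≤ c * ‖T' f‖ := by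
  have hnorm1 : ‖T ∘L S'‖ ≤ c := by
    refine opNorm_le_bound _ hc0 (fun x => ?_)
    have := hb (S' x)
    have hx : S (S' x) = x := by
      have := congrArg (fun (U : H →L[ℝ] H) => U x) hSS'
      simpa using this
    simpa [hx] using this
  have hadj : ContinuousLinearMap.adjoint (T ∘L S') = S' ∘L T := by
    rw [adjoint_comp, hS'.adjoint_eq, hT.adjoint_eq]
  have hnorm2 : ‖S' ∘L T‖ ≤ c := by
    rw [← hadj, LinearIsometryEquiv.norm_map]
    exact hnorm1
  intro f
  have hf : T (T' f) = f := by
    have := congrArg (fun (U : H →L[ℝ] H) => U f) hTT'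
    simpa using this
  calc ‖S' f‖ = ‖(S' ∘L T) (T' f)‖ := by simp [hf]
    _ ≤ ‖S' ∘L T‖ * ‖T' f‖ := le_opNorm _ _
    _ ≤ c * ‖T' f‖ := by
        exact mul_le_mul_of_nonneg_right hnorm2 (norm_nonneg _)

/-- For self-adjoint invertible bounded operators `A`, `B` on a Hilbert space
and `c ≥ 1`, if `‖A f‖/‖B f‖ ∈ [c⁻¹, c]` for all nonzero `f`, then
`‖A⁻¹ f‖/‖B⁻¹ f‖ ∈ [c⁻¹, c]` for all nonzero `f`. -/
theorem stmt1 {H : Type*} [NormedAddCommGroup H] [InnerProductSpace ℝ H] [CompleteSpace H]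
    (A B A' B' : H →L[ℝ] H)
    (hA : IsSelfAdjoint A) (hB : IsSelfAdjoint B)
    (hAA' : A ∘L A' = 1) (hA'A : A' ∘L A = 1)
    (hBB' : B ∘L B' = 1) (hB'B : B' ∘L B = 1)
    (c : ℝ) (hc : 1 ≤ c)
    (h : ∀ f : H, f ≠ 0 → c⁻¹ ≤ ‖A f‖ / ‖B f‖ ∧ ‖A f‖ / ‖B f‖ ≤ c) :
    ∀ f : H, f ≠ 0 → c⁻¹ ≤ ‖A' f‖ / ‖B' f‖ ∧ ‖A' f‖ / ‖B' f‖ ≤ c := by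
  have hcpos : (0:ℝ) < c := lt_of_lt_of_le one_pos hc
  have hA'sa : IsSelfAdjoint A' := aux_adj_inv A A' hA hAA' hA'A
  have hB'sa : IsSelfAdjoint B' := aux_adj_inv B B' hB hBB' hB'B
  -- pointwise bounds for A, B on all f
  have hBne : ∀ f : H, f ≠ 0 → ‖B f‖ ≠ 0 := by
    intro f hf
    simp only [ne_eq, norm_eq_zero]
    intro h0
    apply hf
    have := congrArg (fun (U : H →L[ℝ] H) => U f) hB'B
    simp only [coe_comp', Function.comp_apply, one_apply] at this
    change B' (B f) = f at this
    rw [← this, h0, map_zero]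
  have hb1 : ∀ f : H, ‖B f‖ ≤ c * ‖A f‖ := by
    intro f
    by_cases hf : f = 0
    · simp [hf]
    · have h1 := (h f hf).1
      have hBpos : 0 < ‖B f‖ := lt_of_le_of_ne (norm_nonneg _) (Ne.symm (hBne f hf))
      rw [le_div_iff₀ hBpos, inv_mul_le_iff₀ hcpos] at h1
      linarith
  have hb2 : ∀ f : H, ‖A f‖ ≤ c * ‖B f‖ := by
    intro f
    by_cases hf : f = 0
    · simp [hf]
    · have h2 := (h f hf).2
      have hBpos : 0 < ‖B f‖ := lt_of_le_of_ne (norm_nonneg _) (Ne.symm (hBne f hf))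
      rw [div_le_iff₀ hBpos] at h2
      exact h2
  have key1 : ∀ f, ‖A' f‖ ≤ c * ‖B' f‖ :=
    aux_key A B A' B' hA'sa hB hAA' hBB' c hcpos.le hb1
  have key2 : ∀ f, ‖B' f‖ ≤ c * ‖A' f‖ :=
    aux_key B A B' A' hB'sa hA hBB' hAA' c hcpos.le hb2
  intro f hf
  have hB'ne : B' f ≠ 0 := by
    intro h0
    apply hf
    have := congrArg (fun (U : H →L[ℝ] H) => U f) hBB'
    simp only [coe_comp', Function.comp_apply, one_apply] at this
    change B (B' f) = f at this
    rw [← this, h0, map_zero]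
  have hB'pos : 0 < ‖B' f‖ := norm_pos_iff.mpr hB'ne
  constructor
  · rw [le_div_iff₀ hB'pos, inv_mul_le_iff₀ hcpos]
    exact key2 f
  · rw [div_le_iff₀ hB'pos]
    exact key1 f
end

section
/- For any positive semidefinite Hermitian matrices A and B of the same size, ‖A^{1/2} − B^{1/2}‖_op ≤ √(‖A − B‖_op), where A^{1/2} denotes the unique positive semidefinite square root. -/
open scoped ComplexOrder

/-- The spectral (ℓ²-operator) norm of a square complex matrix. -/
noncomputable def opNorm {n : Type*} [Fintype n] [DecidableEq n] (M : Matrix n n ℂ) : ℝ :=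
  ‖(Matrix.toEuclideanCLM (𝕜 := ℂ) M : EuclideanSpace ℂ n →L[ℂ] EuclideanSpace ℂ n)‖

/-- The square root of a positive semidefinite matrix (as `Matrix.PosSemidef.sqrt` was defined
in the older Mathlib, where it has since been removed). -/
noncomputable def Matrix.PosSemidef.sqrt {n : Type*} [Fintype n] [DecidableEq n] {A : Matrix n n ℂ}
    (hA : A.PosSemidef) : Matrix n n ℂ :=
  (hA.1.eigenvectorUnitary : Matrix n n ℂ) *
    Matrix.diagonal (fun i => ((Real.sqrt (hA.1.eigenvalues i) : ℝ) : ℂ)) *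
    (star hA.1.eigenvectorUnitary : Matrix n n ℂ)

lemma Matrix.PosSemidef.posSemidef_sqrt {n : Type*} [Fintype n] [DecidableEq n] {A : Matrix n n ℂ}
    (hA : A.PosSemidef) : hA.sqrt.PosSemidef := by
  unfold Matrix.PosSemidef.sqrt
  rw [Matrix.star_eq_conjTranspose]
  apply Matrix.PosSemidef.mul_mul_conjTranspose_same
  rw [Matrix.posSemidef_diagonal_iff]
  intro i
  exact_mod_cast Real.sqrt_nonneg _

lemma Matrix.PosSemidef.sqrt_mul_self {n : Type*} [Fintype n] [DecidableEq n] {A : Matrix n n ℂ}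
    (hA : A.PosSemidef) : hA.sqrt * hA.sqrt = A := by
  unfold Matrix.PosSemidef.sqrt
  conv_rhs => rw [hA.1.spectral_theorem, Unitary.conjStarAlgAut_apply]
  have hU : (star hA.1.eigenvectorUnitary : Matrix n n ℂ) * (hA.1.eigenvectorUnitary : Matrix n n ℂ) = 1 :=
    Unitary.coe_star_mul_self _
  simp only [Matrix.mul_assoc]
  rw [← Matrix.mul_assoc (star _ : Matrix n n ℂ), hU, Matrix.one_mul, ← Matrix.mul_assoc (Matrix.diagonal _),
    Matrix.diagonal_mul_diagonal]
  congr 3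
  funext i
  simp only [Function.comp_apply, ← Complex.ofReal_mul]
  rw [Real.mul_self_sqrt (hA.eigenvalues_nonneg i)]
  rfl

section Aux

open scoped InnerProductSpace
open Matrix

variable {n : Type*} [Fintype n] [DecidableEq n]

lemma toEuclideanCLM_apply_eq (M : Matrix n n ℂ) (x : EuclideanSpace ℂ n) :
    (Matrix.toEuclideanCLM (𝕜 := ℂ) M : EuclideanSpace ℂ n →L[ℂ] EuclideanSpace ℂ n) x
      = (WithLp.equiv 2 (n → ℂ)).symm (M *ᵥ (WithLp.equiv 2 (n → ℂ) x)) := rfl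

lemma clm_eigen {C : Matrix n n ℂ} (hC : C.IsHermitian) (j : n) :
    (Matrix.toEuclideanCLM (𝕜 := ℂ) C : EuclideanSpace ℂ n →L[ℂ] EuclideanSpace ℂ n)
        (hC.eigenvectorBasis j)
      = (hC.eigenvalues j : ℂ) • hC.eigenvectorBasis j := by
  rw [toEuclideanCLM_apply_eq]
  have h := hC.mulVec_eigenvectorBasis j
  have : C *ᵥ (WithLp.equiv 2 (n → ℂ)) (hC.eigenvectorBasis j)
      = hC.eigenvalues j • (WithLp.equiv 2 (n → ℂ)) (hC.eigenvectorBasis j) := h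
  rw [this, RCLike.real_smul_eq_coe_smul (K := ℂ)]
  rfl

lemma clm_symm {C : Matrix n n ℂ} (hC : C.IsHermitian) (x y : EuclideanSpace ℂ n) :
    ⟪(Matrix.toEuclideanCLM (𝕜 := ℂ) C : EuclideanSpace ℂ n →L[ℂ] EuclideanSpace ℂ n) x, y⟫_ℂ
      = ⟪x, (Matrix.toEuclideanCLM (𝕜 := ℂ) C : EuclideanSpace ℂ n →L[ℂ] EuclideanSpace ℂ n) y⟫_ℂ :=
  (Matrix.isHermitian_iff_isSymmetric.mp hC) x y

lemma opNorm_le_of_eigen {C : Matrix n n ℂ} (hC : C.IsHermitian) {c : ℝ} (hc : 0 ≤ c)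
    (h : ∀ j, |hC.eigenvalues j| ≤ c) : opNorm C ≤ c := by
  apply ContinuousLinearMap.opNorm_le_bound _ hc
  intro y
  set T := (Matrix.toEuclideanCLM (𝕜 := ℂ) C : EuclideanSpace ℂ n →L[ℂ] EuclideanSpace ℂ n)
  set b := hC.eigenvectorBasis
  have hrepr : ∀ j, b.repr (T y) j = (hC.eigenvalues j : ℂ) * b.repr y j := by
    intro j
    rw [b.repr_apply_apply, b.repr_apply_apply, ← clm_symm hC (b j) y, clm_eigen hC j,
      inner_smul_left]
    simp [Complex.conj_ofReal]
    exact Or.inl rfl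
  calc ‖T y‖ = Real.sqrt (∑ j, ‖b.repr (T y) j‖ ^ 2) := by
        rw [← b.repr.norm_map (T y), EuclideanSpace.norm_eq]
    _ ≤ Real.sqrt (∑ j, c ^ 2 * ‖b.repr y j‖ ^ 2) := by
        apply Real.sqrt_le_sqrt
        apply Finset.sum_le_sum
        intro j _
        rw [hrepr j, norm_mul, Complex.norm_real, Real.norm_eq_abs, mul_pow]
        have h1 : |hC.eigenvalues j| ^ 2 ≤ c ^ 2 :=
          pow_le_pow_left₀ (abs_nonneg _) (h j) 2
        exact mul_le_mul_of_nonneg_right h1 (by positivity)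
    _ = c * Real.sqrt (∑ j, ‖b.repr y j‖ ^ 2) := by
        rw [← Finset.mul_sum, Real.sqrt_mul (by positivity), Real.sqrt_sq hc]
    _ = c * ‖y‖ := by rw [← EuclideanSpace.norm_eq, b.repr.norm_map]

end Aux

open scoped InnerProductSpace in
/-- For positive semidefinite Hermitian matrices `A`, `B`,
`‖A^{1/2} − B^{1/2}‖_op ≤ √‖A − B‖_op`. -/
theorem stmt3 {n : Type*} [Fintype n] [DecidableEq n] {A B : Matrix n n ℂ}
    (hA : A.PosSemidef) (hB : B.PosSemidef) :
    opNorm (hA.sqrt - hB.sqrt) ≤ Real.sqrt (opNorm (A - B)) := by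
  rcases isEmpty_or_nonempty n with hn | hn
  · have h0 : hA.sqrt - hB.sqrt = 0 := Subsingleton.elim _ _
    rw [h0]
    have : opNorm (0 : Matrix n n ℂ) = 0 := by
      rw [opNorm, map_zero, norm_zero]
    rw [this]
    exact Real.sqrt_nonneg _
  · have hC : (hA.sqrt - hB.sqrt).IsHermitian :=
      hA.posSemidef_sqrt.1.sub hB.posSemidef_sqrt.1
    obtain ⟨i, -, hi⟩ := Finset.exists_max_image (Finset.univ : Finset n)
      (fun j => |hC.eigenvalues j|) ⟨Classical.arbitrary n, Finset.mem_univ _⟩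
    set lam := hC.eigenvalues i with hlam
    set x := hC.eigenvectorBasis i with hx
    have hnorm : opNorm (hA.sqrt - hB.sqrt) ≤ |lam| :=
      opNorm_le_of_eigen hC (abs_nonneg _) (fun j => hi j (Finset.mem_univ j))
    have hx1 : ‖x‖ = 1 := hC.eigenvectorBasis.orthonormal.1 i
    -- notation
    set T := (Matrix.toEuclideanCLM (𝕜 := ℂ) (hA.sqrt - hB.sqrt) :
      EuclideanSpace ℂ n →L[ℂ] EuclideanSpace ℂ n) with hT
    set SA := (Matrix.toEuclideanCLM (𝕜 := ℂ) hA.sqrt :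
      EuclideanSpace ℂ n →L[ℂ] EuclideanSpace ℂ n) with hSA
    set SB := (Matrix.toEuclideanCLM (𝕜 := ℂ) hB.sqrt :
      EuclideanSpace ℂ n →L[ℂ] EuclideanSpace ℂ n) with hSB
    set D := (Matrix.toEuclideanCLM (𝕜 := ℂ) (A - B) :
      EuclideanSpace ℂ n →L[ℂ] EuclideanSpace ℂ n) with hD
    have hTx : T x = (lam : ℂ) • x := clm_eigen hC i
    set a := ⟪x, SA x⟫_ℂ with ha
    set b := ⟪x, SB x⟫_ℂ with hb
    -- positivity of a and b
    have hA' : 0 ≤ a := by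
      rw [ha, hSA, toEuclideanCLM_apply_eq]
      rw [EuclideanSpace.inner_eq_star_dotProduct, dotProduct_comm]
      exact hA.posSemidef_sqrt.dotProduct_mulVec_nonneg ((WithLp.equiv 2 (n → ℂ)) x)
    have hB' : 0 ≤ b := by
      rw [hb, hSB, toEuclideanCLM_apply_eq]
      rw [EuclideanSpace.inner_eq_star_dotProduct, dotProduct_comm]
      exact hB.posSemidef_sqrt.dotProduct_mulVec_nonneg ((WithLp.equiv 2 (n → ℂ)) x)
    have haim : a = (a.re : ℂ) := by
      rw [Complex.le_def] at hA'
      exact (Complex.re_add_im a) ▸ by rw [← hA'.2]; simp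
    have hbim : b = (b.re : ℂ) := by
      rw [Complex.le_def] at hB'
      exact (Complex.re_add_im b) ▸ by rw [← hB'.2]; simp
    have hare : 0 ≤ a.re := by rw [Complex.le_def] at hA'; simpa using hA'.1
    have hbre : 0 ≤ b.re := by rw [Complex.le_def] at hB'; simpa using hB'.1
    -- T = SA - SB
    have hTsub : T = SA - SB := by rw [hT, hSA, hSB, map_sub]
    -- lam = a - b
    have hlamab : (lam : ℂ) = a - b := by
      have h1 : ⟪x, T x⟫_ℂ = (lam : ℂ) := by
        rw [hTx, inner_smul_right, inner_self_eq_norm_sq_to_K, hx1]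
        simp
      rw [← h1, hTsub]
      simp [ha, hb, inner_sub_right]
    -- key identity
    have hID : A - B = hA.sqrt * (hA.sqrt - hB.sqrt) + (hA.sqrt - hB.sqrt) * hB.sqrt := by
      rw [mul_sub, sub_mul, hA.sqrt_mul_self, hB.sqrt_mul_self]
      abel
    have hDeq : D = SA * T + T * SB := by
      rw [hD, hID, map_add, map_mul, map_mul, hT, hSA, hSB]
    have hinnerD : ⟪x, D x⟫_ℂ = (lam : ℂ) * (a + b) := by
      have hDx : D x = SA (T x) + T (SB x) := by
        rw [hDeq]; rfl
      rw [hDx, inner_add_right]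
      have e1 : ⟪x, SA (T x)⟫_ℂ = (lam : ℂ) * a := by
        rw [hTx, map_smul, inner_smul_right, ha]
      have e2 : ⟪x, T (SB x)⟫_ℂ = (lam : ℂ) * b := by
        rw [← clm_symm hC x (SB x), hTx, inner_smul_left, Complex.conj_ofReal, hb]
      rw [e1, e2, mul_add]
    -- Cauchy-Schwarz bound
    have hCS : ‖⟪x, D x⟫_ℂ‖ ≤ opNorm (A - B) := by
      calc ‖⟪x, D x⟫_ℂ‖ ≤ ‖x‖ * ‖D x‖ := norm_inner_le_norm _ _
        _ ≤ ‖x‖ * (‖D‖ * ‖x‖) :=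
            mul_le_mul_of_nonneg_left (D.le_opNorm x) (norm_nonneg _)
        _ = ‖D‖ := by rw [hx1]; ring
    -- compute the norm of the inner product
    have hnormD : ‖⟪x, D x⟫_ℂ‖ = |lam| * |a.re + b.re| := by
      rw [hinnerD, haim, hbim, ← Complex.ofReal_add, norm_mul, Complex.norm_real,
        Complex.norm_real, Real.norm_eq_abs, Real.norm_eq_abs]
      simp
    -- main inequality : lam ^ 2 ≤ opNorm (A - B)
    have hmain : lam ^ 2 ≤ opNorm (A - B) := by
      have h1 : lam = a.re - b.re := by
        have := hlamab
        rw [haim, hbim, ← Complex.ofReal_sub] at this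
        exact_mod_cast this
      have h2 : lam ^ 2 ≤ |lam| * |a.re + b.re| := by
        rw [abs_of_nonneg (by linarith : (0:ℝ) ≤ a.re + b.re)]
        nlinarith [le_abs_self lam, neg_abs_le lam, abs_nonneg lam]
      calc lam ^ 2 ≤ |lam| * |a.re + b.re| := h2
        _ = ‖⟪x, D x⟫_ℂ‖ := hnormD.symm
        _ ≤ opNorm (A - B) := hCS
    refine hnorm.trans ?_
    rw [Real.le_sqrt (abs_nonneg _) (le_trans (sq_nonneg lam) hmain)]
    rwa [sq_abs]
end

section
/- Let K be a positive semidefinite Hermitian matrix and let P, P' be positive definite Hermitian matrices of the same size. Suppose γ > 0 is such that for all vectors f, (1+γ)⁻¹ ‖P^{1/2} f‖ ≤ ‖P'^{1/2} f‖ ≤ (1+γ) ‖P^{1/2} f‖, and suppose P commutes with K. Then κ(P'^{1/2} K P'^{1/2}) ≤ (1+γ)⁴ κ(P K), where κ is the ratio of largest to smallest nonzero singular value. -/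
open scoped ComplexOrder
open scoped MatrixOrder

/-- The set of (nonzero) singular values of `M`:
positive reals `s` with `s²` an eigenvalue of `Mᴴ M`. -/
noncomputable def singVals {n : Type*} [Fintype n] [DecidableEq n]
    (M : Matrix n n ℂ) : Set ℝ :=
  {s : ℝ | 0 < s ∧ ((s : ℂ) ^ 2) ∈ spectrum ℂ (M.conjTranspose * M)}

/-- Condition number: largest singular value divided by smallest nonzero singular value. -/
noncomputable def kappa {n : Type*} [Fintype n] [DecidableEq n]
    (M : Matrix n n ℂ) : ℝ :=
  sSup (singVals M) / sInf (singVals M)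

namespace Stmt11Aux

open Matrix

variable {n : Type*} [Fintype n] [DecidableEq n]

/-- The positive part of the spectrum. -/
noncomputable def posSpec (M : Matrix n n ℂ) : Set ℝ :=
  {s : ℝ | 0 < s ∧ (s : ℂ) ∈ spectrum ℂ M}

lemma mem_spec_iff {M : Matrix n n ℂ} (hM : M.IsHermitian) {s : ℝ} :
    (s : ℂ) ∈ spectrum ℂ M ↔ ∃ i, hM.eigenvalues i = s := by
  rw [show ((s : ℂ)) = algebraMap ℝ ℂ s from rfl, spectrum.algebraMap_mem_iff,
    hM.spectrum_real_eq_range_eigenvalues]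
  exact Iff.rfl

lemma posSpec_finite {M : Matrix n n ℂ} (hM : M.IsHermitian) : (posSpec M).Finite := by
  refine (Set.finite_range hM.eigenvalues).subset ?_
  rintro s ⟨-, hs⟩
  obtain ⟨i, hi⟩ := (mem_spec_iff hM).mp hs
  exact ⟨i, hi⟩

lemma dot_self_re (x : n → ℂ) :
    (star x ⬝ᵥ x).re = ∑ i, Complex.normSq (x i) := by
  simp [dotProduct, Complex.normSq_apply, Complex.mul_re]

lemma dot_self_re_pos {x : n → ℂ} (hx : x ≠ 0) : 0 < (star x ⬝ᵥ x).re := by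
  rw [dot_self_re]
  obtain ⟨i, hi⟩ := Function.ne_iff.mp hx
  exact Finset.sum_pos' (fun j _ => Complex.normSq_nonneg _)
    ⟨i, Finset.mem_univ i, by simpa using hi⟩

lemma q_sum {M : Matrix n n ℂ} (hM : M.IsHermitian) (x : n → ℂ) :
    (star x ⬝ᵥ M *ᵥ x).re
      = ∑ i, hM.eigenvalues i
          * Complex.normSq ((star (hM.eigenvectorUnitary : Matrix n n ℂ) *ᵥ x) i) := by
  set U : Matrix n n ℂ := (hM.eigenvectorUnitary : Matrix n n ℂ) with hU
  set u : n → ℂ := star U *ᵥ x with hu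
  have hstar : star u = star x ᵥ* U := by
    rw [hu, star_mulVec, star_eq_conjTranspose, conjTranspose_conjTranspose]
  have key : star x ⬝ᵥ M *ᵥ x
      = star u ⬝ᵥ (diagonal ((fun r : ℝ => (r : ℂ)) ∘ hM.eigenvalues)) *ᵥ u := by
    conv_lhs => rw [hM.spectral_theorem]
    rw [hstar, hu, mulVec_mulVec]
    simp only [dotProduct_mulVec, vecMul_vecMul, Matrix.mul_assoc]
    norm_num
    rw [Matrix.mul_assoc]
  rw [key]
  have hsum : star u ⬝ᵥ (diagonal ((fun r : ℝ => (r : ℂ)) ∘ hM.eigenvalues)) *ᵥ u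
      = ∑ i, (hM.eigenvalues i : ℂ) * ((Complex.normSq (u i) : ℝ) : ℂ) := by
    simp only [dotProduct, mulVec_diagonal, Function.comp, Pi.star_apply,
      Complex.star_def]
    refine Finset.sum_congr rfl fun i _ => ?_
    rw [Complex.normSq_eq_conj_mul_self]
    ring
  rw [hsum, Complex.re_sum]
  refine Finset.sum_congr rfl fun i _ => ?_
  rw [← Complex.ofReal_mul, Complex.ofReal_re]

lemma norm_sum {M : Matrix n n ℂ} (hM : M.IsHermitian) (x : n → ℂ) :
    (star x ⬝ᵥ x).re
      = ∑ i, Complex.normSq ((star (hM.eigenvectorUnitary : Matrix n n ℂ) *ᵥ x) i) := by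
  set U : Matrix n n ℂ := (hM.eigenvectorUnitary : Matrix n n ℂ) with hU
  set u : n → ℂ := star U *ᵥ x with hu
  have hstar : star u = star x ᵥ* U := by
    rw [hu, star_mulVec, star_eq_conjTranspose, conjTranspose_conjTranspose]
  have key : star u ⬝ᵥ u = star x ⬝ᵥ x := by
    rw [hstar, hu, dotProduct_mulVec, vecMul_vecMul,
      mem_unitaryGroup_iff.mp hM.eigenvectorUnitary.2, vecMul_one]
  rw [← key, dot_self_re]

lemma rayleigh_upper {M : Matrix n n ℂ} (hM : M.PosSemidef) (x : n → ℂ)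
    (hx : 0 < (star x ⬝ᵥ M *ᵥ x).re) :
    ∃ s ∈ posSpec M, (star x ⬝ᵥ M *ᵥ x).re ≤ s * (star x ⬝ᵥ x).re := by
  rw [q_sum hM.1 x] at hx ⊢
  rw [norm_sum hM.1 x]
  set u : n → ℂ := star (hM.1.eigenvectorUnitary : Matrix n n ℂ) *ᵥ x with hu
  cases isEmpty_or_nonempty n with
  | inl h => simp at hx
  | inr h =>
    obtain ⟨j, -, hj⟩ := Finset.exists_max_image Finset.univ hM.1.eigenvalues
      ⟨Classical.arbitrary n, Finset.mem_univ _⟩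
    have hub : ∑ i, hM.1.eigenvalues i * Complex.normSq (u i)
        ≤ hM.1.eigenvalues j * ∑ i, Complex.normSq (u i) := by
      rw [Finset.mul_sum]
      exact Finset.sum_le_sum fun i _ =>
        mul_le_mul_of_nonneg_right (hj i (Finset.mem_univ i)) (Complex.normSq_nonneg _)
    have hsum : 0 ≤ ∑ i, Complex.normSq (u i) :=
      Finset.sum_nonneg fun i _ => Complex.normSq_nonneg _
    have hlam : 0 < hM.1.eigenvalues j := by nlinarith
    exact ⟨hM.1.eigenvalues j, ⟨hlam, (mem_spec_iff hM.1).mpr ⟨j, rfl⟩⟩, hub⟩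

lemma rayleigh_lower {M : Matrix n n ℂ} (hM : M.PosSemidef) (x : n → ℂ)
    (hx : ∀ g, M *ᵥ g = 0 → star g ⬝ᵥ x = 0) {m : ℝ}
    (hm : ∀ s ∈ posSpec M, m ≤ s) (hm0 : 0 ≤ m) :
    m * (star x ⬝ᵥ x).re ≤ (star x ⬝ᵥ M *ᵥ x).re := by
  rw [q_sum hM.1 x, norm_sum hM.1 x, Finset.mul_sum]
  refine Finset.sum_le_sum fun i _ => ?_
  by_cases h : hM.1.eigenvalues i = 0
  · have hg : M *ᵥ ⇑(hM.1.eigenvectorBasis i) = 0 := by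
      rw [hM.1.mulVec_eigenvectorBasis, h, zero_smul]
    have hcoord : (star (hM.1.eigenvectorUnitary : Matrix n n ℂ) *ᵥ x) i
        = star (⇑(hM.1.eigenvectorBasis i)) ⬝ᵥ x := by
      simp [Matrix.mulVec, dotProduct, Matrix.star_apply,
        Matrix.star_eq_conjTranspose, Matrix.conjTranspose_apply]
    rw [hcoord, hx _ hg]
    simp
  · have hpos : 0 < hM.1.eigenvalues i := lt_of_le_of_ne (hM.eigenvalues_nonneg i) (Ne.symm h)
    exact mul_le_mul_of_nonneg_right
      (hm _ ⟨hpos, (mem_spec_iff hM.1).mpr ⟨i, rfl⟩⟩) (Complex.normSq_nonneg _)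

lemma exists_eigvec {M : Matrix n n ℂ} (hM : M.IsHermitian) {s : ℝ}
    (hs : (s : ℂ) ∈ spectrum ℂ M) :
    ∃ f : n → ℂ, M *ᵥ f = (s : ℂ) • f ∧ 0 < (star f ⬝ᵥ f).re := by
  obtain ⟨i, hi⟩ := (mem_spec_iff hM).mp hs
  refine ⟨⇑(hM.eigenvectorBasis i), ?_, ?_⟩
  · rw [hM.mulVec_eigenvectorBasis, hi]
    funext j
    simp [Complex.real_smul]
  · refine dot_self_re_pos ?_
    intro hzero
    have : hM.eigenvectorBasis i = 0 := by
      ext j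
      exact congrFun hzero j
    exact hM.eigenvectorBasis.orthonormal.ne_zero i this

lemma posSpec_sSup_nonneg (M : Matrix n n ℂ) : 0 ≤ sSup (posSpec M) :=
  Real.sSup_nonneg fun s hs => hs.1.le

lemma posSpec_sInf_nonneg (M : Matrix n n ℂ) : 0 ≤ sInf (posSpec M) :=
  Real.sInf_nonneg fun s hs => hs.1.le

lemma key_comparison {M M' : Matrix n n ℂ} (hM : M.PosSemidef) (hM' : M'.PosSemidef) {c : ℝ}
    (hc : 0 < c)
    (h1 : ∀ x : n → ℂ, (star x ⬝ᵥ M' *ᵥ x).re ≤ c * (star x ⬝ᵥ M *ᵥ x).re)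
    (h2 : ∀ x : n → ℂ, (star x ⬝ᵥ M *ᵥ x).re ≤ c * (star x ⬝ᵥ M' *ᵥ x).re)
    (hker : ∀ g, M *ᵥ g = 0 → M' *ᵥ g = 0) :
    sSup (posSpec M') / sInf (posSpec M') ≤ c ^ 2 * (sSup (posSpec M) / sInf (posSpec M)) := by
  have hfin := posSpec_finite hM.1
  have hfin' := posSpec_finite hM'.1
  rcases Set.eq_empty_or_nonempty (posSpec M') with he | hne
  · rw [he]
    simp only [Real.sSup_empty, Real.sInf_empty, zero_div]
    have := posSpec_sSup_nonneg M
    have := posSpec_sInf_nonneg M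
    positivity
  · -- quadratic form of eigenvector
    have eig_q : ∀ s' ∈ posSpec M', ∃ f : n → ℂ,
        (star f ⬝ᵥ M' *ᵥ f).re = s' * (star f ⬝ᵥ f).re ∧ 0 < (star f ⬝ᵥ f).re ∧
          M' *ᵥ f = (s' : ℂ) • f := by
      intro s' hs'
      obtain ⟨f, hf, hfpos⟩ := exists_eigvec hM'.1 hs'.2
      refine ⟨f, ?_, hfpos, hf⟩
      rw [hf, dotProduct_smul, smul_eq_mul, Complex.re_ofReal_mul]
    have upper : ∀ s' ∈ posSpec M', ∃ s ∈ posSpec M, s' ≤ c * s := by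
      intro s' hs'
      obtain ⟨f, hq', hfpos, -⟩ := eig_q s' hs'
      have h1f := h1 f
      rw [hq'] at h1f
      have hqpos : 0 < (star f ⬝ᵥ M *ᵥ f).re := by nlinarith [hs'.1]
      obtain ⟨s, hsmem, hub⟩ := rayleigh_upper hM f hqpos
      refine ⟨s, hsmem, ?_⟩
      have h3 : s' * (star f ⬝ᵥ f).re ≤ (c * s) * (star f ⬝ᵥ f).re := by nlinarith
      exact le_of_mul_le_mul_right h3 hfpos
    have lower : ∀ s' ∈ posSpec M', sInf (posSpec M) ≤ c * s' := by
      intro s' hs'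
      obtain ⟨f, hq', hfpos, hf⟩ := eig_q s' hs'
      have hx : ∀ g, M *ᵥ g = 0 → star g ⬝ᵥ f = 0 := by
        intro g hg
        have hg' := hker g hg
        have hdot : star g ⬝ᵥ M' *ᵥ f = 0 := by
          rw [dotProduct_mulVec, show star g ᵥ* M' = star (M' *ᵥ g) by
            rw [star_mulVec, hM'.1.eq], hg']
          simp
        rw [hf, dotProduct_smul, smul_eq_mul, mul_eq_zero] at hdot
        rcases hdot with h | h
        · exact absurd (Complex.ofReal_eq_zero.mp h) hs'.1.ne'
        · exact h
      have hlow := rayleigh_lower hM f hx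
        (m := sInf (posSpec M))
        (fun s hs => csInf_le ⟨0, fun y hy => hy.1.le⟩ hs)
        (posSpec_sInf_nonneg M)
      have h2f := h2 f
      rw [hq'] at h2f
      have h3 : sInf (posSpec M) * (star f ⬝ᵥ f).re
          ≤ (c * s') * (star f ⬝ᵥ f).re := by nlinarith
      exact le_of_mul_le_mul_right h3 hfpos
    obtain ⟨s₀, hs₀⟩ := hne
    obtain ⟨s₁, hs₁, -⟩ := upper s₀ hs₀
    have hEne : (posSpec M).Nonempty := ⟨s₁, hs₁⟩
    have hI : sInf (posSpec M) ∈ posSpec M := hEne.csInf_mem hfin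
    have hI' : sInf (posSpec M') ∈ posSpec M' := (Set.nonempty_of_mem hs₀).csInf_mem hfin'
    have hIpos : 0 < sInf (posSpec M) := hI.1
    have hI'pos : 0 < sInf (posSpec M') := hI'.1
    have hS' : sSup (posSpec M') ≤ c * sSup (posSpec M) := by
      refine Real.sSup_le (fun s' hs' => ?_)
        (mul_nonneg hc.le (posSpec_sSup_nonneg M))
      obtain ⟨s, hsm, h⟩ := upper s' hs'
      exact h.trans (mul_le_mul_of_nonneg_left (le_csSup hfin.bddAbove hsm) hc.le)
    have hI'low : c⁻¹ * sInf (posSpec M) ≤ sInf (posSpec M') := by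
      refine le_csInf ⟨s₀, hs₀⟩ fun s' hs' => ?_
      have := lower s' hs'
      rw [inv_mul_le_iff₀ hc]
      linarith [this]
    have hIcpos : 0 < c⁻¹ * sInf (posSpec M) := mul_pos (inv_pos.mpr hc) hIpos
    have main : sSup (posSpec M') / sInf (posSpec M')
        ≤ (c * sSup (posSpec M)) / (c⁻¹ * sInf (posSpec M)) :=
      div_le_div₀ (mul_nonneg hc.le (posSpec_sSup_nonneg M)) hS' hIcpos hI'low
    refine main.trans (le_of_eq ?_)
    field_simp

lemma sandwich_dot (C R : Matrix n n ℂ) (hC : Cᴴ = C) (x : n → ℂ) :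
    star (C *ᵥ x) ⬝ᵥ R *ᵥ (C *ᵥ x) = star x ⬝ᵥ (C * R * C) *ᵥ x := by
  rw [star_mulVec, hC, mulVec_mulVec, dotProduct_mulVec, vecMul_vecMul,
    ← Matrix.mul_assoc, ← dotProduct_mulVec]

/-- The complex spectrum of a Hermitian matrix is the range of its eigenvalues. -/
lemma spectrum_herm {M : Matrix n n ℂ} (hM : M.IsHermitian) :
    spectrum ℂ M = Set.range (fun i => (hM.eigenvalues i : ℂ)) := by
  rw [hM.spectrum_eq_image_range]
  ext z
  simp [Function.comp]

/-- Characterization of `singVals` via the positive spectrum of a "partner" matrix. -/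
lemma singVals_eq {A N : Matrix n n ℂ} (hA : A.IsHermitian) (hN : N.PosSemidef)
    (hswap : spectrum ℂ A \ {0} = spectrum ℂ N \ {0}) :
    singVals A = posSpec N := by
  ext s
  simp only [singVals, posSpec, Set.mem_setOf_eq, and_congr_right_iff]
  intro hs
  have hAA : A.conjTranspose * A = A ^ 2 := by rw [hA.eq, sq]
  rw [hAA, spectrum.map_pow_of_pos A two_pos]
  constructor
  · rintro ⟨μ, hμ, hμ2⟩
    replace hμ2 : μ ^ 2 = ((s : ℂ)) ^ 2 := hμ2
    have hμne : μ ≠ 0 := by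
      rintro rfl
      rw [zero_pow two_ne_zero] at hμ2
      have hzero : (s : ℂ) = 0 := (pow_eq_zero_iff two_ne_zero).mp hμ2.symm
      exact hs.ne' (Complex.ofReal_eq_zero.mp hzero)
    have hμN : μ ∈ spectrum ℂ N :=
      (hswap ▸ (Set.mem_diff μ).mpr ⟨hμ, hμne⟩).1
    rw [spectrum_herm hN.1] at hμN
    obtain ⟨i, hi⟩ := hμN
    replace hi : ((hN.1.eigenvalues i : ℝ) : ℂ) = μ := hi
    have h2 : (hN.1.eigenvalues i : ℂ) ^ 2 = ((s : ℂ)) ^ 2 := by rw [hi, hμ2]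
    have h2' : hN.1.eigenvalues i ^ 2 = s ^ 2 := by
      exact_mod_cast h2
    have hnn := hN.eigenvalues_nonneg i
    have heq : hN.1.eigenvalues i = s := by nlinarith
    rw [spectrum_herm hN.1]
    exact ⟨i, by simp [heq]⟩
  · intro hsN
    have hmem : (s : ℂ) ∈ spectrum ℂ A := by
      have h : (s : ℂ) ∈ spectrum ℂ N \ {0} :=
        ⟨hsN, by simpa using Complex.ofReal_ne_zero.mpr hs.ne'⟩
      exact (hswap.symm ▸ h).1
    exact ⟨(s : ℂ), hmem, rfl⟩

end Stmt11Aux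

/-- If `(1+γ)⁻¹ ‖P^{1/2} f‖ ≤ ‖P'^{1/2} f‖ ≤ (1+γ) ‖P^{1/2} f‖` for all `f`
and `P` commutes with `K`, then `κ(P'^{1/2} K P'^{1/2}) ≤ (1+γ)⁴ κ(P K)`. -/
theorem stmt11 {n : Type*} [Fintype n] [DecidableEq n] {K P P' : Matrix n n ℂ}
    (hK : K.PosSemidef) (hP : P.PosDef) (hP' : P'.PosDef)
    (hcomm : P * K = K * P) (γ : ℝ) (hγ : 0 < γ)
    (hratio : ∀ f : EuclideanSpace ℂ n,
      (1 + γ)⁻¹ * ‖Matrix.toEuclideanCLM (𝕜 := ℂ) (CFC.sqrt P) f‖ ≤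
          ‖Matrix.toEuclideanCLM (𝕜 := ℂ) (CFC.sqrt P') f‖ ∧
        ‖Matrix.toEuclideanCLM (𝕜 := ℂ) (CFC.sqrt P') f‖ ≤
          (1 + γ) * ‖Matrix.toEuclideanCLM (𝕜 := ℂ) (CFC.sqrt P) f‖) :
    kappa (CFC.sqrt P' * K * CFC.sqrt P') ≤ (1 + γ) ^ 4 * kappa (P * K) := by
  classical
  open Matrix Stmt11Aux in
  set C : Matrix n n ℂ := CFC.sqrt K with hCdef
  set Q : Matrix n n ℂ := CFC.sqrt P with hQdef
  set Q' : Matrix n n ℂ := CFC.sqrt P' with hQ'def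
  have hC : Cᴴ = C := (Matrix.nonneg_iff_posSemidef.mp (CFC.sqrt_nonneg K)).1
  have hQh : Qᴴ = Q := (Matrix.nonneg_iff_posSemidef.mp (CFC.sqrt_nonneg P)).1
  have hQ'h : Q'ᴴ = Q' := (Matrix.nonneg_iff_posSemidef.mp (CFC.sqrt_nonneg P')).1
  have hCC : C * C = K := CFC.sqrt_mul_sqrt_self K (Matrix.nonneg_iff_posSemidef.mpr hK)
  have hQQ : Q * Q = P := CFC.sqrt_mul_sqrt_self P (Matrix.nonneg_iff_posSemidef.mpr hP.posSemidef)
  have hQ'Q' : Q' * Q' = P' := CFC.sqrt_mul_sqrt_self P' (Matrix.nonneg_iff_posSemidef.mpr hP'.posSemidef)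
  -- the partner matrices
  set M : Matrix n n ℂ := C * P * C with hMdef
  set M' : Matrix n n ℂ := C * P' * C with hM'def
  have hM : M.PosSemidef := by
    have := hP.posSemidef.conjTranspose_mul_mul_same C
    rwa [hC] at this
  have hM' : M'.PosSemidef := by
    have := hP'.posSemidef.conjTranspose_mul_mul_same C
    rwa [hC] at this
  -- quadratic forms via euclidean CLM
  have normsq : ∀ (R : Matrix n n ℂ) (y : n → ℂ),
      ‖Matrix.toEuclideanCLM (𝕜 := ℂ) R ((WithLp.equiv 2 (n → ℂ)).symm y)‖ ^ 2
        = (star y ⬝ᵥ (Rᴴ * R) *ᵥ y).re := by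
    intro R y
    rw [WithLp.equiv_symm_apply, Matrix.toEuclideanCLM_toLp]
    rw [← inner_self_eq_norm_sq (𝕜 := ℂ) (WithLp.toLp 2 (R *ᵥ y))]
    rw [EuclideanSpace.inner_toLp_toLp, RCLike.re_to_complex]
    congr 1
    rw [dotProduct_comm]
    rw [star_mulVec, dotProduct_mulVec, vecMul_vecMul, ← dotProduct_mulVec]
  have qP : ∀ x : n → ℂ,
      ‖Matrix.toEuclideanCLM (𝕜 := ℂ) Q ((WithLp.equiv 2 (n → ℂ)).symm (C *ᵥ x))‖ ^ 2
        = (star x ⬝ᵥ M *ᵥ x).re := by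
    intro x
    rw [normsq Q (C *ᵥ x), hQh, hQQ, sandwich_dot C P hC x]
  have qP' : ∀ x : n → ℂ,
      ‖Matrix.toEuclideanCLM (𝕜 := ℂ) Q' ((WithLp.equiv 2 (n → ℂ)).symm (C *ᵥ x))‖ ^ 2
        = (star x ⬝ᵥ M' *ᵥ x).re := by
    intro x
    rw [normsq Q' (C *ᵥ x), hQ'h, hQ'Q', sandwich_dot C P' hC x]
  have hγ1 : (0:ℝ) < 1 + γ := by linarith
  have h1 : ∀ x : n → ℂ, (star x ⬝ᵥ M' *ᵥ x).re ≤ (1 + γ)^2 * (star x ⬝ᵥ M *ᵥ x).re := by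
    intro x
    rw [← qP, ← qP']
    have h := (hratio ((WithLp.equiv 2 (n → ℂ)).symm (C *ᵥ x))).2
    calc ‖Matrix.toEuclideanCLM (𝕜 := ℂ) Q' ((WithLp.equiv 2 (n → ℂ)).symm (C *ᵥ x))‖ ^ 2
        ≤ ((1 + γ) * ‖Matrix.toEuclideanCLM (𝕜 := ℂ) Q ((WithLp.equiv 2 (n → ℂ)).symm (C *ᵥ x))‖) ^ 2 :=
          pow_le_pow_left₀ (norm_nonneg _) h 2
      _ = (1 + γ)^2 * ‖Matrix.toEuclideanCLM (𝕜 := ℂ) Q ((WithLp.equiv 2 (n → ℂ)).symm (C *ᵥ x))‖ ^ 2 := by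
          ring
  have h2 : ∀ x : n → ℂ, (star x ⬝ᵥ M *ᵥ x).re ≤ (1 + γ)^2 * (star x ⬝ᵥ M' *ᵥ x).re := by
    intro x
    rw [← qP, ← qP']
    have h := (hratio ((WithLp.equiv 2 (n → ℂ)).symm (C *ᵥ x))).1
    have h' : ‖Matrix.toEuclideanCLM (𝕜 := ℂ) Q ((WithLp.equiv 2 (n → ℂ)).symm (C *ᵥ x))‖
        ≤ (1 + γ) * ‖Matrix.toEuclideanCLM (𝕜 := ℂ) Q' ((WithLp.equiv 2 (n → ℂ)).symm (C *ᵥ x))‖ := by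
      rw [inv_mul_le_iff₀ hγ1] at h
      linarith
    calc ‖Matrix.toEuclideanCLM (𝕜 := ℂ) Q ((WithLp.equiv 2 (n → ℂ)).symm (C *ᵥ x))‖ ^ 2
        ≤ ((1 + γ) * ‖Matrix.toEuclideanCLM (𝕜 := ℂ) Q' ((WithLp.equiv 2 (n → ℂ)).symm (C *ᵥ x))‖) ^ 2 :=
          pow_le_pow_left₀ (norm_nonneg _) h' 2
      _ = (1 + γ)^2 * ‖Matrix.toEuclideanCLM (𝕜 := ℂ) Q' ((WithLp.equiv 2 (n → ℂ)).symm (C *ᵥ x))‖ ^ 2 := by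
          ring
  have hker : ∀ g : n → ℂ, M *ᵥ g = 0 → M' *ᵥ g = 0 := by
    intro g hg
    have hCg : C *ᵥ g = 0 := by
      by_contra hne
      have hdot : star g ⬝ᵥ M *ᵥ g = 0 := by rw [hg, dotProduct_zero]
      rw [← sandwich_dot C P hC g] at hdot
      exact absurd hdot (ne_of_gt (hP.dotProduct_mulVec_pos hne))
    have : M' *ᵥ g = (C * P') *ᵥ (C *ᵥ g) := by
      rw [mulVec_mulVec, hM'def]
    rw [this, hCg, mulVec_zero]
  -- identify singVals with posSpec
  have hsv' : singVals (Q' * K * Q') = posSpec M' := by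
    refine singVals_eq ?_ hM' ?_
    · show (Q' * K * Q')ᴴ = Q' * K * Q'
      rw [conjTranspose_mul, conjTranspose_mul, hQ'h, hK.1.eq]
      rw [Matrix.mul_assoc]
    · have hfactor : Q' * K * Q' = (Q' * C) * (C * Q') := by
        rw [← hCC]; noncomm_ring
      have hfactor' : (C * Q') * (Q' * C) = M' := by
        rw [hM'def, ← hQ'Q']; noncomm_ring
      rw [hfactor, spectrum.nonzero_mul_comm, hfactor']
  have hsv : singVals (P * K) = posSpec M := by
    refine singVals_eq ?_ hM ?_
    · show (P * K)ᴴ = P * K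
      rw [conjTranspose_mul, hK.1.eq, hP.1.eq, ← hcomm]
    · have hfactor : P * K = (P * C) * C := by
        rw [← hCC]; noncomm_ring
      have hfactor' : C * (P * C) = M := by
        rw [hMdef]; noncomm_ring
      rw [hfactor, spectrum.nonzero_mul_comm, hfactor']
  have hc : (0:ℝ) < (1 + γ)^2 := by positivity
  have main := key_comparison hM hM' hc h1 h2 hker
  rw [kappa, kappa, hsv, hsv']
  calc sSup (posSpec M') / sInf (posSpec M')
      ≤ ((1 + γ)^2)^2 * (sSup (posSpec M) / sInf (posSpec M)) := main
    _ = (1 + γ)^4 * (sSup (posSpec M) / sInf (posSpec M)) := by ring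
end

section
/- Let K be a positive semidefinite Hermitian matrix with eigenvalues λ₁ ≥ λ₂ ≥ … and λ_q > 0, and let P_q = I − Σ_{i=1}^{q−1}(1 − λ_q/λ_i) ψ_i ψ_i* be the level-q spectral preconditioner. Then P_q^{1/2} = √λ_q · h_{√λ_q}(K^{1/2})⁻¹, where h_α applies the function x ↦ max(x, α) to the eigenvalues via the spectral functional calculus. -/
open scoped ComplexOrder

namespace Stmt14Aux

open Matrix

variable {n : ℕ}

noncomputable def S (ψ : Fin n → (Fin n → ℂ)) (c : Fin n → ℝ) : Matrix (Fin n) (Fin n) ℂ :=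
  ∑ i, ((c i : ℂ)) • Matrix.vecMulVec (ψ i) (star (ψ i))

variable {ψ : Fin n → (Fin n → ℂ)}
  (horth : ∀ i j, dotProduct (star (ψ i)) (ψ j) = if i = j then 1 else 0)

noncomputable def V (ψ : Fin n → (Fin n → ℂ)) : Matrix (Fin n) (Fin n) ℂ :=
  Matrix.of fun i j => ψ j i

include horth

lemma VhV : (V ψ)ᴴ * (V ψ) = 1 := by
  ext i j
  have := horth i j
  simpa [Matrix.mul_apply, V, dotProduct, Matrix.one_apply] using this

lemma VVh : (V ψ) * (V ψ)ᴴ = 1 := mul_eq_one_comm.mp (VhV horth)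

lemma S_eq (c : Fin n → ℝ) :
    S ψ c = V ψ * Matrix.diagonal (fun i => (c i : ℂ)) * (V ψ)ᴴ := by
  ext j k
  simp [S, Matrix.mul_apply, Matrix.diagonal, V, Matrix.sum_apply, Matrix.vecMulVec_apply,
    Finset.mul_sum, Finset.sum_mul]
  congr 1
  ext i
  ring

lemma S_mul (c d : Fin n → ℝ) : S ψ c * S ψ d = S ψ (c * d) := by
  rw [S_eq horth, S_eq horth, S_eq horth]
  have : (V ψ * diagonal (fun i => (c i : ℂ)) * (V ψ)ᴴ) *
      (V ψ * diagonal (fun i => (d i : ℂ)) * (V ψ)ᴴ)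
      = V ψ * (diagonal (fun i => (c i : ℂ)) * ((V ψ)ᴴ * V ψ) * diagonal (fun i => (d i : ℂ))) * (V ψ)ᴴ := by
    simp only [Matrix.mul_assoc]
  rw [this, VhV horth]
  simp [Matrix.diagonal_mul_diagonal]

lemma S_one : S ψ 1 = 1 := by
  rw [S_eq horth]
  simpa using VVh horth

lemma S_psd {c : Fin n → ℝ} (hc : ∀ i, 0 ≤ c i) : (S ψ c).PosSemidef := by
  rw [S_eq horth]
  exact Matrix.PosSemidef.mul_mul_conjTranspose_same
    (Matrix.posSemidef_diagonal_iff.mpr fun i => by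
      simpa using Complex.zero_le_real.mpr (hc i)) _

omit horth in
lemma S_smul (a : ℝ) (c : Fin n → ℝ) : S ψ (a • c) = a • S ψ c := by
  simp only [S, Finset.smul_sum]
  norm_cast
  simp [Pi.smul_apply, mul_smul]

omit horth in
lemma S_add (c d : Fin n → ℝ) : S ψ (c + d) = S ψ c + S ψ d := by
  simp [S, ← Finset.sum_add_distrib, add_smul, Complex.ofReal_add]

omit horth in
lemma S_sub (c d : Fin n → ℝ) : S ψ (c - d) = S ψ c - S ψ d := by
  simp [S, ← Finset.sum_sub_distrib, sub_smul, Complex.ofReal_sub]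

omit horth in
lemma vecMulVec_mulVec (u v x : Fin n → ℂ) :
    (Matrix.vecMulVec u v) *ᵥ x = (v ⬝ᵥ x) • u := by
  funext k
  simp only [Matrix.mulVec, dotProduct, Matrix.vecMulVec_apply, Pi.smul_apply,
    smul_eq_mul, Finset.sum_mul]
  exact Finset.sum_congr rfl fun j _ => by ring

lemma S_pow (c : Fin n → ℝ) (k : ℕ) : S ψ c ^ k = S ψ (c ^ k) := by
  induction k with
  | zero => simpa using (S_one horth).symm
  | succ m ih => rw [pow_succ, ih, S_mul horth, ← pow_succ]

lemma S_aeval (c : Fin n → ℝ) (p : Polynomial ℝ) :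
    Polynomial.aeval (S ψ c) p = S ψ (fun i => p.eval (c i)) := by
  induction p using Polynomial.induction_on with
  | C r =>
    simp only [Polynomial.aeval_C, Polynomial.eval_C]
    rw [show (fun _ : Fin n => r) = r • (1 : Fin n → ℝ) by ext; simp,
      S_smul, S_one horth, Algebra.algebraMap_eq_smul_one]
  | add p q hp hq =>
    simp only [map_add, Polynomial.eval_add, hp, hq]
    rw [← S_add]
    rfl
  | monomial m r _ =>
    rw [_root_.map_mul, Polynomial.aeval_C, map_pow, Polynomial.aeval_X, S_pow horth,
      Algebra.algebraMap_eq_smul_one, smul_mul_assoc, one_mul, ← S_smul]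
    have h : (r • c ^ (m + 1)) = fun i => r * c i ^ (m + 1) := by
      funext i; simp [Pi.smul_apply, Pi.pow_apply]
    rw [h]
    simp

omit horth in
open scoped MatrixOrder in
lemma psd_eq_of_sq {A B : Matrix (Fin n) (Fin n) ℂ} (hA : A.PosSemidef) (hB : B.PosSemidef)
    (h : A ^ 2 = B ^ 2) : A = B :=
  (CFC.sq_eq_sq_iff A B hA.nonneg hB.nonneg).mp h

omit horth in
open scoped MatrixOrder in
lemma psd_sqrt_eq {K B : Matrix (Fin n) (Fin n) ℂ} (hK : K.PosSemidef) (hB : B.PosSemidef)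
    (h : B ^ 2 = K) : B = hK.1.cfc Real.sqrt := by
  rw [← Matrix.IsHermitian.cfc_eq, ← cfcₙ_eq_cfc, ← CFC.sqrt_eq_real_sqrt K hK.nonneg]
  exact ((CFC.sqrt_eq_iff K B hK.nonneg hB.nonneg).mpr (by rw [← h, pow_two])).symm

end Stmt14Aux

/-- Port helper: the PSD square root `hA.1.cfc Real.sqrt` (old `Matrix.PosSemidef.sqrt`)
is Hermitian. -/
theorem stmt14_sqrt_isHermitian {n : ℕ} {K : Matrix (Fin n) (Fin n) ℂ} (hK : K.PosSemidef) :
    (hK.1.cfc Real.sqrt).IsHermitian := by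
  rw [← Matrix.IsHermitian.cfc_eq]
  exact cfc_predicate Real.sqrt K


section Main
open Matrix Stmt14Aux

/-- With `K = ∑ λᵢ ψᵢψᵢ*` PSD, nonincreasing eigenvalues, orthonormal
eigenvectors and `λ_q > 0`, the PSD square root of the spectral preconditioner
`P_q = I − ∑_{i<q} (1 − λ_q/λᵢ) ψᵢψᵢ*` equals `√λ_q · h_{√λ_q}(K^{1/2})⁻¹`, where
`h_α` applies `x ↦ max x α` to the eigenvalues via the spectral functional calculus. -/
theorem stmt14 {n : ℕ} {K : Matrix (Fin n) (Fin n) ℂ} (hK : K.PosSemidef)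
    (lam : Fin n → ℝ) (hmono : Antitone lam)
    (ψ : Fin n → (Fin n → ℂ))
    (horth : ∀ i j, dotProduct (star (ψ i)) (ψ j) = if i = j then 1 else 0)
    (hdecomp : K = ∑ i, ((lam i : ℂ)) • Matrix.vecMulVec (ψ i) (star (ψ i)))
    (q : Fin n) (hq : 0 < lam q)
    (Pq : Matrix (Fin n) (Fin n) ℂ)
    (hPq : Pq = 1 - ∑ i ∈ Finset.Iio q,
      (((1 - lam q / lam i : ℝ)) : ℂ) • Matrix.vecMulVec (ψ i) (star (ψ i))) :
    ∀ Q : Matrix (Fin n) (Fin n) ℂ, Q.PosSemidef → Q * Q = Pq →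
      Q = Real.sqrt (lam q) •
        ((stmt14_sqrt_isHermitian hK).cfc (fun x => max x (Real.sqrt (lam q))))⁻¹ := by
  classical
  intro Q hQ hQQ
  set α := Real.sqrt (lam q) with hα
  have hαpos : 0 < α := Real.sqrt_pos.mpr hq
  set f : ℝ → ℝ := fun x => max x α with hf
  -- eigenvalues are nonnegative
  have hKS : K = S ψ lam := hdecomp
  have hlam : ∀ i, 0 ≤ lam i := by
    intro i
    have h1 : dotProduct (star (ψ i)) (K *ᵥ ψ i) = (lam i : ℂ) := by
      have hsum : (∑ j, ((lam j : ℂ) • Matrix.vecMulVec (ψ j) (star (ψ j)))) *ᵥ ψ i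
          = ∑ j, (((lam j : ℂ) • Matrix.vecMulVec (ψ j) (star (ψ j))) *ᵥ ψ i) := by
        funext k
        simp only [Matrix.mulVec, dotProduct, Matrix.sum_apply, Finset.sum_mul,
          Finset.sum_apply]
        exact Finset.sum_comm
      have hds : ∀ (w : Fin n → Fin n → ℂ),
          dotProduct (star (ψ i)) (∑ j, w j) = ∑ j, dotProduct (star (ψ i)) (w j) := by
        intro w
        simp only [dotProduct, Finset.sum_apply, Finset.mul_sum]
        exact Finset.sum_comm
      rw [hdecomp, hsum, hds]
      have key : ∀ j, dotProduct (star (ψ i))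
          (((lam j : ℂ) • Matrix.vecMulVec (ψ j) (star (ψ j))) *ᵥ ψ i)
          = (lam j : ℂ) * ((if j = i then 1 else 0) * (if i = j then 1 else 0)) := by
        intro j
        rw [Matrix.smul_mulVec, vecMulVec_mulVec, horth j i,
          dotProduct_smul, dotProduct_smul, horth i j]
        simp only [smul_eq_mul]
        try ring
      rw [Finset.sum_congr rfl fun j _ => key j, Finset.sum_eq_single i]
      · simp
      · intro j _ hji
        simp [hji]
      · simp
    have h2 := hK.dotProduct_mulVec_nonneg (ψ i)
    rw [h1] at h2
    exact_mod_cast h2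
  -- the square root of K
  set g : Fin n → ℝ := fun i => Real.sqrt (lam i) with hg
  have hgpsd : (S ψ g).PosSemidef := S_psd horth fun i => Real.sqrt_nonneg _
  have hsq : (S ψ g) ^ 2 = K := by
    have hgg : g * g = lam := funext fun i => Real.mul_self_sqrt (hlam i)
    rw [pow_two, S_mul horth, hgg, ← hKS]
  have hsqrt : S ψ g = hK.1.cfc Real.sqrt := psd_sqrt_eq hK hgpsd hsq
  -- the cfc computation
  have hfin : (Set.range g ∪ spectrum ℝ (S ψ g)).Finite :=
    (Set.finite_range g).union Matrix.finite_real_spectrum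
  set s : Finset ℝ := hfin.toFinset with hs
  set p : Polynomial ℝ := Lagrange.interpolate s id f with hp
  have hpeval : ∀ x ∈ s, p.eval x = f x := by
    intro x hx
    exact Lagrange.eval_interpolate_at_node f (Set.injOn_id _) hx
  have hsa : IsSelfAdjoint (S ψ g) := hgpsd.1
  have hcfc : (stmt14_sqrt_isHermitian hK).cfc f = S ψ (fun i => f (g i)) := by
    rw [← Matrix.IsHermitian.cfc_eq, ← hsqrt]
    have h1 : _root_.cfc f (S ψ g) = _root_.cfc p.eval (S ψ g) :=
      cfc_congr fun x hx => (hpeval x (hfin.mem_toFinset.mpr (Or.inr hx))).symm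
    rw [h1, cfc_polynomial p _ hsa, S_aeval horth]
    have : (fun i => p.eval (g i)) = fun i => f (g i) :=
      funext fun i => hpeval (g i) (hfin.mem_toFinset.mpr (Or.inl ⟨i, rfl⟩))
    rw [this]
  -- inverse
  have hhpos : ∀ i, 0 < f (g i) := fun i => lt_max_of_lt_right hαpos
  have hinv : (S ψ (fun i => f (g i)))⁻¹ = S ψ (fun i => (f (g i))⁻¹) := by
    apply Matrix.inv_eq_right_inv
    rw [S_mul horth]
    rw [show ((fun i => f (g i)) * fun i => (f (g i))⁻¹) = 1 from
      funext fun i => mul_inv_cancel₀ (hhpos i).ne']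
    exact S_one horth
  have hT : α • (S ψ (fun i => (f (g i))⁻¹)) = S ψ (fun i => α * (f (g i))⁻¹) := by
    rw [← S_smul]
    rfl
  have hTpsd : (S ψ (fun i => α * (f (g i))⁻¹)).PosSemidef :=
    S_psd horth fun i => mul_nonneg hαpos.le (inv_nonneg.mpr (hhpos i).le)
  -- Pq in terms of S
  have hPqS : Pq = S ψ ((fun i => α * (f (g i))⁻¹) * (fun i => α * (f (g i))⁻¹)) := by
    rw [hPq]
    have e2 : ∑ i ∈ Finset.Iio q,
        (((1 - lam q / lam i : ℝ)) : ℂ) • Matrix.vecMulVec (ψ i) (star (ψ i))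
        = S ψ (fun i => if i ∈ Finset.Iio q then 1 - lam q / lam i else 0) := by
      rw [S]
      rw [← Finset.sum_subset (Finset.subset_univ (Finset.Iio q))]
      · exact Finset.sum_congr rfl fun i hi => by simp [hi]
      · intro i _ hi
        simp [hi]
    rw [e2, show (1 : Matrix (Fin n) (Fin n) ℂ) = S ψ 1 from (S_one horth).symm, ← S_sub]
    have hco : ((1 : Fin n → ℝ) - fun i => if i ∈ Finset.Iio q then 1 - lam q / lam i else 0)
        = (fun i => α * (f (g i))⁻¹) * (fun i => α * (f (g i))⁻¹) := by
      funext i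
      simp only [Pi.mul_apply, Pi.sub_apply, Pi.one_apply]
      by_cases hiq : i ∈ Finset.Iio q
      · have hlq : lam q ≤ lam i := hmono (Finset.mem_Iio.mp hiq).le
        have hipos : 0 < lam i := lt_of_lt_of_le hq hlq
        have hmax : f (g i) = Real.sqrt (lam i) :=
          max_eq_left (hα ▸ Real.sqrt_le_sqrt hlq)
        rw [if_pos hiq, hmax]
        have e3 : α * (Real.sqrt (lam i))⁻¹ * (α * (Real.sqrt (lam i))⁻¹)
            = (α * α) / ((Real.sqrt (lam i)) * (Real.sqrt (lam i))) := by
          rw [div_eq_mul_inv, mul_inv]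
          ring
        rw [e3, hα, Real.mul_self_sqrt hq.le, Real.mul_self_sqrt hipos.le]
        ring
      · have hqi : q ≤ i := le_of_not_gt fun h => hiq (Finset.mem_Iio.mpr h)
        have hlq : lam i ≤ lam q := hmono hqi
        have hmax : f (g i) = α := max_eq_right (hα ▸ Real.sqrt_le_sqrt hlq)
        rw [if_neg hiq, hmax, mul_inv_cancel₀ hαpos.ne']
        norm_num
    rw [hco]
  -- conclude
  have hTT : S ψ (fun i => α * (f (g i))⁻¹) * S ψ (fun i => α * (f (g i))⁻¹) = Pq := by
    rw [S_mul horth, hPqS]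
  have goalT : Q = S ψ (fun i => α * (f (g i))⁻¹) :=
    psd_eq_of_sq hQ hTpsd (by rw [pow_two, pow_two, hQQ, hTT])
  rw [goalT, hcfc, hinv, hT]

end Main
end

section
/- Let K be a positive semidefinite Hermitian matrix with eigenvalues λ₁ ≥ … and eigenvectors ψ_i, let q satisfy λ_q > 0, and let P_q be the level-q spectral preconditioner P_q = I − Σ_{i=1}^{q−1}(1 − λ_q/λ_i) ψ_i ψ_i*. Then the nonzero eigenvalues of P_q K are exactly: λ_q with multiplicity at least q (for the subspace spanned by ψ₁,…,ψ_q), and λ_i for i > q; in particular κ(P_q K) = λ_q / λ_r, where λ_r is the smallest nonzero eigenvalue of K. -/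
open scoped ComplexOrder

open Matrix in
lemma vecMulVec_mulVec'' {n : Type*} [Fintype n] (u v x : n → ℂ) :
    (vecMulVec u v).mulVec x = (v ⬝ᵥ x) • u := by
  ext i
  simp only [mulVec, vecMulVec_apply, dotProduct, Pi.smul_apply, smul_eq_mul,
    Finset.sum_mul]
  exact Finset.sum_congr rfl fun j _ => by ring

open Matrix in
lemma sum_mulVec'' {m n ι : Type*} [Fintype n] (s : Finset ι)
    (f : ι → Matrix m n ℂ) (x : n → ℂ) :
    (∑ i ∈ s, f i).mulVec x = ∑ i ∈ s, (f i).mulVec x := by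
  ext j
  simp only [mulVec, dotProduct, Matrix.sum_apply, Finset.sum_apply, Finset.sum_mul]
  rw [Finset.sum_comm]

open Matrix in
lemma vecMulVec_conjTranspose'' {n : Type*} [Fintype n] (u v : n → ℂ) :
    (vecMulVec u v)ᴴ = vecMulVec (star v) (star u) := by
  ext i j
  simp [vecMulVec_apply, conjTranspose_apply, mul_comm]


/-- With `K = ∑ λᵢ ψᵢψᵢ*` PSD (nonincreasing eigenvalues, orthonormal
eigenvectors), `λ_q > 0`, and `P_q` the level-`q` spectral preconditioner, the
eigenstructure of `P_q K` is: `P_q K ψᵢ = λ_q ψᵢ` for `i ≤ q` and `P_q K ψᵢ = λᵢ ψᵢ` for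
`i > q`; in particular `κ(P_q K) = λ_q / λ_r` where `λ_r` is the smallest nonzero
eigenvalue of `K`. -/
theorem stmt15 {n : ℕ} {K : Matrix (Fin n) (Fin n) ℂ} (hK : K.PosSemidef)
    (lam : Fin n → ℝ) (hmono : Antitone lam)
    (ψ : Fin n → (Fin n → ℂ))
    (horth : ∀ i j, dotProduct (star (ψ i)) (ψ j) = if i = j then 1 else 0)
    (hdecomp : K = ∑ i, ((lam i : ℂ)) • Matrix.vecMulVec (ψ i) (star (ψ i)))
    (q : Fin n) (hq : 0 < lam q)
    (r : Fin n) (hr : 0 < lam r) (hrlast : ∀ i, r < i → lam i = 0)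
    (Pq : Matrix (Fin n) (Fin n) ℂ)
    (hPq : Pq = 1 - ∑ i ∈ Finset.Iio q,
      (((1 - lam q / lam i : ℝ)) : ℂ) • Matrix.vecMulVec (ψ i) (star (ψ i))) :
    (∀ i, i ≤ q → (Pq * K).mulVec (ψ i) = ((lam q : ℂ)) • ψ i) ∧
    (∀ i, q < i → (Pq * K).mulVec (ψ i) = ((lam i : ℂ)) • ψ i) ∧
    kappa (Pq * K) = lam q / lam r := by
  classical
  -- μ j : the eigenvalue of Pq * K on ψ j
  set μ : Fin n → ℝ := fun j => if j < q then lam q else lam j with hμdef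
  have hqr : q ≤ r := by
    by_contra h
    exact absurd (hrlast q (lt_of_not_ge h)) (ne_of_gt hq)
  have hnn : ∀ j, 0 ≤ lam j := by
    intro j
    rcases le_or_gt j r with h | h
    · exact le_trans hr.le (hmono h)
    · rw [hrlast j h]
  have hμnn : ∀ j, 0 ≤ μ j := by
    intro j; simp only [hμdef]; split <;> [exact hq.le; exact hnn j]
  -- K acting on ψ j
  have hKψ : ∀ j, K.mulVec (ψ j) = (lam j : ℂ) • ψ j := by
    intro j
    rw [hdecomp, sum_mulVec'']
    simp only [Matrix.smul_mulVec, vecMulVec_mulVec'', horth]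
    rw [Finset.sum_eq_single j]
    · simp
    · intro i _ hij; simp [hij]
    · simp
  -- Pq acting on ψ j
  have hPψ : ∀ j, Pq.mulVec (ψ j) =
      (if j < q then ((lam q / lam j : ℝ) : ℂ) else 1) • ψ j := by
    intro j
    rw [hPq, Matrix.sub_mulVec, Matrix.one_mulVec, sum_mulVec'']
    simp only [Matrix.smul_mulVec, vecMulVec_mulVec'', horth]
    by_cases hj : j < q
    · rw [Finset.sum_eq_single j]
      · have hlamj : lam j ≠ 0 := ne_of_gt (lt_of_lt_of_le hq (hmono hj.le))
        simp only [if_pos rfl, hj, if_true, smul_smul, mul_one]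
        have h1 : ((1 - lam q / lam j : ℝ) : ℂ) = 1 - ((lam q / lam j : ℝ) : ℂ) := by
          push_cast; ring
        rw [h1]
        module
      · intro i _ hij; simp [hij]
      · intro h; exact absurd (Finset.mem_Iio.mpr hj) h
    · rw [Finset.sum_eq_zero, sub_zero, if_neg hj, one_smul]
      intro i hi
      have : i ≠ j := by
        intro h; subst h; exact hj (Finset.mem_Iio.mp hi)
      simp [this]
  -- scalar identity
  have hscal : ∀ j, (lam j : ℂ) * (if j < q then ((lam q / lam j : ℝ) : ℂ) else 1)
      = ((μ j : ℝ) : ℂ) := by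
    intro j
    simp only [hμdef]
    by_cases hj : j < q
    · have hlamj : (lam j : ℝ) ≠ 0 := ne_of_gt (lt_of_lt_of_le hq (hmono hj.le))
      rw [if_pos hj, if_pos hj]
      push_cast
      field_simp
    · rw [if_neg hj, if_neg hj, mul_one]
  -- Pq * K acting on ψ j
  have hMψ : ∀ j, (Pq * K).mulVec (ψ j) = ((μ j : ℝ) : ℂ) • ψ j := by
    intro j
    rw [← Matrix.mulVec_mulVec, hKψ, Matrix.mulVec_smul, hPψ, smul_smul, hscal]
  -- K * Pq acting on ψ j
  have hMψ' : ∀ j, (K * Pq).mulVec (ψ j) = ((μ j : ℝ) : ℂ) • ψ j := by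
    intro j
    rw [← Matrix.mulVec_mulVec, hPψ, Matrix.mulVec_smul, hKψ, smul_smul, mul_comm, hscal]
  refine ⟨?_, ?_, ?_⟩
  · intro i hi
    rw [hMψ i]
    congr 1
    simp only [hμdef]
    rcases lt_or_eq_of_le hi with h | h
    · rw [if_pos h]
    · rw [if_neg (by simp [h]), h]
  · intro i hi
    rw [hMψ i]
    congr 1
    simp only [hμdef]
    rw [if_neg (not_lt.mpr hi.le)]
  -- the condition number computation
  · -- conjTranspose facts
    have hPH : Pq.conjTranspose = Pq := by
      rw [hPq]
      rw [Matrix.conjTranspose_sub, Matrix.conjTranspose_one, Matrix.conjTranspose_sum]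
      congr 1
      refine Finset.sum_congr rfl fun i _ => ?_
      rw [Matrix.conjTranspose_smul, vecMulVec_conjTranspose'', star_star]
      congr 1
      simp [Complex.conj_ofReal]
    have hMH : (Pq * K).conjTranspose = K * Pq := by
      rw [Matrix.conjTranspose_mul, hPH, hK.isHermitian]
    set A : Matrix (Fin n) (Fin n) ℂ := (Pq * K).conjTranspose * (Pq * K) with hA
    have hAψ : ∀ j, A.mulVec (ψ j) = (((μ j : ℝ) : ℂ) ^ 2) • ψ j := by
      intro j
      rw [hA, hMH, ← Matrix.mulVec_mulVec, hMψ, Matrix.mulVec_smul, hMψ', smul_smul,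
        sq]
    -- unitary change of basis
    set U : Matrix (Fin n) (Fin n) ℂ := Matrix.of fun i j => ψ j i with hU
    have hUU : U.conjTranspose * U = 1 := by
      ext i j
      simp only [Matrix.mul_apply, Matrix.conjTranspose_apply, hU, Matrix.of_apply,
        Matrix.one_apply]
      have := horth i j
      simpa [dotProduct] using this
    have hU2 : U * U.conjTranspose = 1 := mul_eq_one_comm.mp hUU
    set d : Fin n → ℂ := fun j => ((μ j : ℝ) : ℂ) ^ 2 with hd
    have hAU : A * U = U * Matrix.diagonal d := by
      ext i j
      have h1 : (A * U) i j = A.mulVec (ψ j) i := by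
        simp [Matrix.mul_apply, Matrix.mulVec, dotProduct, hU]
      rw [h1, hAψ, Matrix.mul_diagonal]
      simp [hU, hd, mul_comm]
    have hAeq : A = U * Matrix.diagonal d * U.conjTranspose := by
      rw [← hAU, mul_assoc, hU2, mul_one]
    have hspec : spectrum ℂ A = Set.range d := by
      set u : (Matrix (Fin n) (Fin n) ℂ)ˣ := ⟨U, U.conjTranspose, hU2, hUU⟩ with hu
      rw [hAeq,
        show U * Matrix.diagonal d * U.conjTranspose
          = ↑u * Matrix.diagonal d * ↑u⁻¹ from rfl,
        spectrum.units_conjugate, spectrum_diagonal]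
    -- identify singVals
    have hSV : singVals (Pq * K) = μ '' {j | 0 < μ j} := by
      ext s
      show (0 < s ∧ ((s : ℂ) ^ 2) ∈ spectrum ℂ A) ↔ _
      rw [hspec]
      simp only [Set.mem_setOf_eq, Set.mem_range, Set.mem_image]
      constructor
      · rintro ⟨hs, j, hj⟩
        have h2 : (μ j) ^ 2 = s ^ 2 := by
          have h3 : ((μ j ^ 2 : ℝ) : ℂ) = ((s ^ 2 : ℝ) : ℂ) := by
            push_cast
            simpa [hd] using hj
          exact_mod_cast h3
        have h3 : μ j = s := by
          have h4 := hμnn j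
          apply le_antisymm <;> nlinarith
        exact ⟨j, by rw [h3]; exact hs, h3⟩
      · rintro ⟨j, hj, rfl⟩
        exact ⟨hj, j, by rw [hd]⟩
    have hgreat : IsGreatest (singVals (Pq * K)) (lam q) := by
      rw [hSV]
      constructor
      · exact ⟨q, by simpa [hμdef] using hq, by simp [hμdef]⟩
      · rintro s ⟨j, hj, rfl⟩
        simp only [hμdef]
        split
        · exact le_refl _
        · exact hmono (le_of_not_gt (by assumption))
    have hleast : IsLeast (singVals (Pq * K)) (lam r) := by
      rw [hSV]
      constructor
      · exact ⟨r, by simpa [hμdef, not_lt.mpr hqr] using hr,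
          by simp [hμdef, not_lt.mpr hqr]⟩
      · rintro s ⟨j, hj, rfl⟩
        simp only [hμdef, Set.mem_setOf_eq] at hj ⊢
        by_cases hjq : j < q
        · rw [if_pos hjq]
          exact hmono hqr
        · rw [if_neg hjq] at hj ⊢
          have hjr : j ≤ r := by
            by_contra h
            exact absurd (hrlast j (lt_of_not_ge h)) (ne_of_gt hj)
          exact hmono hjr
    rw [kappa, hgreat.csSup_eq, hleast.csInf_eq]
end
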